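/- Let κ : ℝ → ℝ be continuous with -K ≤ κ ≤ -k, 0 < k ≤ K, and let a, b solve y'' + κ y = 0 with initial data (1,0) and (0,1). Then for every τ > 0 there exists r > 0 depending only on τ, k, K such that for all t ≥ τ: |a'(t)| ≥ r |b'(t)|. -/

import Mathlib

lemma monoHelp {f f' : ℝ → ℝ} {s : Set ℝ} (hs : Convex ℝ s)
    (hf : ∀ t ∈ s, HasDerivAt f (f' t) t) (h : ∀ t ∈ s, 0 ≤ f' t) :
    MonotoneOn f s := by
  apply monotoneOn_of_deriv_nonneg hs
  · exact fun t ht => (hf t ht).continuousAt.continuousWithinAt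
  · exact fun t ht => (hf t (interior_subset ht)).differentiableAt.differentiableWithinAt
  · intro t ht
    rw [(hf t (interior_subset ht)).deriv]
    exact h t (interior_subset ht)


lemma antiHelp {f f' : ℝ → ℝ} {s : Set ℝ} (hs : Convex ℝ s)
    (hf : ∀ t ∈ s, HasDerivAt f (f' t) t) (h : ∀ t ∈ s, f' t ≤ 0) :
    AntitoneOn f s := by
  apply antitoneOn_of_deriv_nonpos hs
  · exact fun t ht => (hf t ht).continuousAt.continuousWithinAt
  · exact fun t ht => (hf t (interior_subset ht)).differentiableAt.differentiableWithinAt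
  · intro t ht
    rw [(hf t (interior_subset ht)).deriv]
    exact h t (interior_subset ht)

lemma bootstrap (f f' f'' : ℝ → ℝ)
    (hf : ∀ t, HasDerivAt f (f' t) t) (hf' : ∀ t, HasDerivAt f' (f'' t) t)
    (hpos : 0 < f 0 ∨ 0 < f' 0)
    (h0 : 0 ≤ f 0) (h0' : 0 ≤ f' 0)
    (hf'' : ∀ t, 0 ≤ t → 0 ≤ f t → 0 ≤ f'' t) :
    ∀ t, 0 ≤ t → f 0 ≤ f t ∧ f' 0 ≤ f' t := by
  by_contra hcon
  push_neg at hcon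
  set B : Set ℝ := {t : ℝ | 0 ≤ t ∧ ¬(f 0 ≤ f t ∧ f' 0 ≤ f' t)} with hBdef
  have hBne : B.Nonempty := by
    obtain ⟨t₀, ht₀, h1⟩ := hcon
    rcases le_or_gt (f 0) (f t₀) with h2 | h2
    · exact ⟨t₀, ht₀, fun hc => absurd (h1 h2) (not_lt.2 hc.2)⟩
    · exact ⟨t₀, ht₀, fun hc => absurd hc.1 (not_le.2 h2)⟩
  have hBbd : BddBelow B := ⟨0, fun x hx => hx.1⟩
  set T := sInf B with hTdef
  have hT0 : 0 ≤ T := le_csInf hBne fun x hx => hx.1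
  have hTgood : ∀ s, 0 ≤ s → s ≤ T → f 0 ≤ f s ∧ f' 0 ≤ f' s := by
    have key : ∀ g : ℝ → ℝ, ContinuousAt g T → g T < g 0 → 0 < T →
        (∀ x, 0 ≤ x → g x < g 0 → x ∈ B) → False := by
      intro g hg hlt hTpos hmem
      obtain ⟨δ, hδ, hball⟩ := Metric.eventually_nhds_iff.mp
        (hg.eventually_lt continuousAt_const hlt)
      set s' := T - min δ T / 2 with hs'
      have hmin : 0 < min δ T := lt_min hδ hTpos
      have hd : dist s' T < δ := by
        rw [Real.dist_eq]
        have : |s' - T| = min δ T / 2 := by rw [hs']; rw [abs_of_nonpos] <;> [skip; linarith]; linarith [min_le_left δ T]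
        rw [this]; linarith [min_le_left δ T]
      have hs'B : s' ∈ B := hmem s' (by have := min_le_right δ T; simp only [hs']; linarith) (hball hd)
      have : T ≤ s' := csInf_le hBbd hs'B
      simp only [hs'] at this; linarith
    intro s hs0 hsT
    by_contra hsbad
    have hsB : s ∈ B := ⟨hs0, hsbad⟩
    have hTs : T ≤ s := csInf_le hBbd hsB
    have hsT' : s = T := le_antisymm hsT hTs
    rw [hsT'] at hsbad hs0
    have hTpos : 0 < T := by
      rcases eq_or_lt_of_le hs0 with h | h
      · exact absurd ⟨by rw [← h], by rw [← h]⟩ hsbad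
      · exact h
    rcases not_and_or.mp hsbad with h | h
    · exact key f (hf T).continuousAt (not_le.1 h) hTpos
        (fun x hx hlt => ⟨hx, fun hc => absurd hc.1 (not_le.2 hlt)⟩)
    · exact key f' (hf' T).continuousAt (not_le.1 h) hTpos
        (fun x hx hlt => ⟨hx, fun hc => absurd hc.2 (not_le.2 hlt)⟩)
  -- extension beyond T
  have hfT := hTgood T hT0 le_rfl
  obtain ⟨ε, hε, hnn⟩ : ∃ ε > 0, ∀ s ∈ Set.Icc T (T + ε), 0 ≤ f s := by
    rcases hpos with h | h
    · have hfTpos : (0:ℝ) < f T := lt_of_lt_of_le h hfT.1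
      obtain ⟨δ, hδ, hball⟩ := Metric.eventually_nhds_iff.mp
        (continuousAt_const.eventually_lt (hf T).continuousAt hfTpos)
      refine ⟨δ/2, by linarith, fun s hs => ?_⟩
      refine le_of_lt (hball ?_)
      rw [Real.dist_eq, abs_of_nonneg (by linarith [hs.1])]
      linarith [hs.2]
    · have hfTpos : (0:ℝ) < f' T := lt_of_lt_of_le h hfT.2
      obtain ⟨δ, hδ, hball⟩ := Metric.eventually_nhds_iff.mp
        (continuousAt_const.eventually_lt (hf' T).continuousAt hfTpos)
      refine ⟨δ/2, by linarith, fun s hs => ?_⟩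
      have hmono : MonotoneOn f (Set.Icc T (T + δ/2)) := by
        apply monoHelp (convex_Icc _ _) (fun t _ => hf t)
        intro t ht
        refine le_of_lt (hball ?_)
        rw [Real.dist_eq, abs_of_nonneg (by linarith [ht.1])]
        linarith [ht.2]
      have := hmono (Set.left_mem_Icc.2 (by linarith)) hs hs.1
      linarith [hfT.1]
  have hfnn : ∀ s ∈ Set.Icc 0 (T + ε), 0 ≤ f s := by
    intro s hs
    rcases le_or_gt s T with h | h
    · linarith [(hTgood s hs.1 h).1]
    · exact hnn s ⟨h.le, hs.2⟩
  have hmono' : MonotoneOn f' (Set.Icc 0 (T + ε)) := by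
    apply monoHelp (convex_Icc _ _) (fun t _ => hf' t)
    exact fun t ht => hf'' t ht.1 (hfnn t ht)
  have h0mem : (0:ℝ) ∈ Set.Icc (0:ℝ) (T + ε) := Set.left_mem_Icc.2 (by linarith)
  have hf'ge : ∀ s ∈ Set.Icc 0 (T + ε), f' 0 ≤ f' s :=
    fun s hs => hmono' h0mem hs hs.1
  have hmono'' : MonotoneOn f (Set.Icc 0 (T + ε)) := by
    apply monoHelp (convex_Icc _ _) (fun t _ => hf t)
    exact fun t ht => le_trans h0' (hf'ge t ht)
  obtain ⟨x, hxB, hxlt⟩ := exists_lt_of_csInf_lt hBne (show sInf B < T + ε by rw [← hTdef]; linarith)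
  exact hxB.2 ⟨hmono'' h0mem ⟨hxB.1, hxlt.le⟩ hxB.1, hf'ge x ⟨hxB.1, hxlt.le⟩⟩

set_option maxHeartbeats 1000000 in
theorem stmt_11 (κ a a' b b' : ℝ → ℝ) (k K τ : ℝ)
    (hk : 0 < k) (hkK : k ≤ K) (hτ : 0 < τ)
    (hκc : Continuous κ)
    (hκ : ∀ t : ℝ, 0 ≤ t → -K ≤ κ t ∧ κ t ≤ -k)
    (ha : ∀ t : ℝ, HasDerivAt a (a' t) t)
    (ha' : ∀ t : ℝ, HasDerivAt a' (-(κ t * a t)) t)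
    (ha0 : a 0 = 1) (ha'0 : a' 0 = 0)
    (hb : ∀ t : ℝ, HasDerivAt b (b' t) t)
    (hb' : ∀ t : ℝ, HasDerivAt b' (-(κ t * b t)) t)
    (hb0 : b 0 = 0) (hb'0 : b' 0 = 1) :
    ∃ r : ℝ, 0 < r ∧ ∀ t : ℝ, τ ≤ t → r * |b' t| ≤ |a' t| := by
  have hA := bootstrap a a' (fun t => -(κ t * a t)) ha ha'
    (Or.inl (by rw [ha0]; norm_num)) (by rw [ha0]; norm_num) (by rw [ha'0])
    (fun t ht hat => by show (0:ℝ) ≤ -(κ t * a t); nlinarith [mul_nonneg (show (0:ℝ) ≤ -κ t by linarith [(hκ t ht).2]) hat])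
  have hB := bootstrap b b' (fun t => -(κ t * b t)) hb hb'
    (Or.inr (by rw [hb'0]; norm_num)) (by rw [hb0]) (by rw [hb'0]; norm_num)
    (fun t ht hbt => by show (0:ℝ) ≤ -(κ t * b t); nlinarith [mul_nonneg (show (0:ℝ) ≤ -κ t by linarith [(hκ t ht).2]) hbt])
  have ha1 : ∀ t, 0 ≤ t → 1 ≤ a t := fun t ht => ha0 ▸ (hA t ht).1
  have ha'nn : ∀ t, 0 ≤ t → 0 ≤ a' t := fun t ht => ha'0 ▸ (hA t ht).2
  have hbnn : ∀ t, 0 ≤ t → 0 ≤ b t := fun t ht => hb0 ▸ (hB t ht).1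
  have hb'1 : ∀ t, 0 ≤ t → 1 ≤ b' t := fun t ht => hb'0 ▸ (hB t ht).2
  have h0Ici : (0:ℝ) ∈ Set.Ici (0:ℝ) := Set.mem_Ici.2 le_rfl
  -- a' t ≥ k t
  have ha'k : ∀ t, 0 ≤ t → k * t ≤ a' t := by
    have hm : MonotoneOn (fun t => a' t - k * t) (Set.Ici 0) := by
      apply monoHelp (f' := fun t => -(κ t * a t) - k) (convex_Ici 0)
      · intro t _
        have h := (ha' t).sub ((hasDerivAt_id t).const_mul k)
        exact h.congr_deriv (by ring)
      · intro t ht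
        have h1 := ha1 t ht
        have h2 := (hκ t ht).2
        nlinarith
    intro t ht
    have := hm h0Ici ht ht
    simp only [ha'0, mul_zero, sub_zero, zero_sub] at this
    linarith
  -- a t ≥ 1 + k t²/2
  have haq : ∀ t, 0 ≤ t → 1 + k * t ^ 2 / 2 ≤ a t := by
    have hm : MonotoneOn (fun t => a t - k * t ^ 2 / 2) (Set.Ici 0) := by
      apply monoHelp (f' := fun t => a' t - k * t) (convex_Ici 0)
      · intro t _
        have h := (ha t).sub (((hasDerivAt_pow 2 t).const_mul k).div_const 2)
        exact h.congr_deriv (by push_cast; ring)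
      · intro t ht
        have := ha'k t ht
        linarith
    intro t ht
    have := hm h0Ici ht ht
    simp only [ha0] at this
    nlinarith
  have hapos : ∀ t, 0 ≤ t → 0 < a t := fun t ht => lt_of_lt_of_le one_pos (ha1 t ht)
  -- Wronskian
  have hW : ∀ t, a t * b' t - a' t * b t = 1 := by
    have hd : ∀ t, HasDerivAt (fun t => a t * b' t - a' t * b t) 0 t := by
      intro t
      have h := ((ha t).mul (hb' t)).sub ((ha' t).mul (hb t))
      exact h.congr_deriv (by ring)
    have hconst := is_const_of_deriv_eq_zero
      (f := fun t => a t * b' t - a' t * b t)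
      (fun t => (hd t).differentiableAt) (fun t => (hd t).deriv)
    intro t
    have := hconst t 0
    simp only [ha0, ha'0, hb0, hb'0] at this
    linarith
  -- b ≤ M a
  set sk := Real.sqrt k with hskdef
  have hsk : 0 < sk := Real.sqrt_pos.2 hk
  have hsk2 : sk ^ 2 = k := Real.sq_sqrt hk.le
  set M := Real.pi / 2 / sk with hMdef
  have hM : 0 < M := div_pos (div_pos Real.pi_pos two_pos) hsk
  have hbM : ∀ t, 0 ≤ t → b t ≤ M * a t := by
    have hm : MonotoneOn (fun t => Real.arctan (sk * t) / sk - b t / a t)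
        (Set.Ici 0) := by
      apply monoHelp (f' := fun t => 1 / (1 + k * t ^ 2) - 1 / (a t) ^ 2) (convex_Ici 0)
      · intro t ht
        have h2 : HasDerivAt (fun t : ℝ => sk * t) sk t := by
          simpa using (hasDerivAt_id t).const_mul sk
        have h3 := ((Real.hasDerivAt_arctan (sk * t)).comp t h2).div_const sk
        have h1 : HasDerivAt (fun t : ℝ => Real.arctan (sk * t) / sk)
            (1 / (1 + k * t ^ 2)) t := by
          refine h3.congr_deriv ?_
          rw [mul_pow, hsk2]
          rw [mul_div_assoc, div_self hsk.ne', mul_one]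
        have h6 := (hb t).div (ha t) (ne_of_gt (hapos t ht))
        have hW' : b' t * a t - b t * a' t = 1 := by linarith [hW t]
        rw [hW'] at h6
        exact h1.sub h6
      · intro t ht
        have h1 : 1 + k * t ^ 2 ≤ (a t) ^ 2 := by nlinarith [haq t ht, ha1 t ht, sq_nonneg t]
        have h2 : (0:ℝ) < 1 + k * t ^ 2 := by nlinarith [sq_nonneg t]
        have := one_div_le_one_div_of_le h2 h1
        linarith
    intro t ht
    have h := hm h0Ici ht ht
    simp only [mul_zero, Real.arctan_zero, zero_div, hb0, ha0, sub_zero] at h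
    have harc := (Real.arctan_lt_pi_div_two (sk * t)).le
    have hq : b t / a t ≤ M := by
      rw [hMdef]
      calc b t / a t ≤ Real.arctan (sk * t) / sk := by linarith
        _ ≤ Real.pi / 2 / sk := by gcongr
    exact (div_le_iff₀ (hapos t ht)).1 hq
  -- b'² ≤ 1 + K b²
  have hbb : ∀ t, 0 ≤ t → b' t ^ 2 ≤ 1 + K * b t ^ 2 := by
    have hm : AntitoneOn (fun t => b' t ^ 2 - K * b t ^ 2) (Set.Ici 0) := by
      apply antiHelp (f' := fun t => 2 * b' t * (-(κ t * b t)) - K * (2 * b t * b' t))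
        (convex_Ici 0)
      · intro t _
        have h := ((hb' t).pow 2).sub (((hb t).pow 2).const_mul K)
        exact h.congr_deriv (by push_cast; ring)
      · intro t ht
        have h1 := (hκ t ht).1
        have h2 := hbnn t ht
        have h3 := hb'1 t ht
        have h4 : (0:ℝ) ≤ K + κ t := by linarith
        nlinarith [mul_nonneg (mul_nonneg (show (0:ℝ) ≤ b' t by linarith) h2) h4]
    intro t ht
    have := hm h0Ici ht ht
    simp only [hb0, hb'0] at this
    nlinarith
  -- a'² ≥ k a² − k
  have haa : ∀ t, 0 ≤ t → k * a t ^ 2 - k ≤ a' t ^ 2 := by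
    have hm : MonotoneOn (fun t => a' t ^ 2 - k * a t ^ 2) (Set.Ici 0) := by
      apply monoHelp (f' := fun t => 2 * a' t * (-(κ t * a t)) - k * (2 * a t * a' t))
        (convex_Ici 0)
      · intro t _
        have h := ((ha' t).pow 2).sub (((ha t).pow 2).const_mul k)
        exact h.congr_deriv (by push_cast; ring)
      · intro t ht
        have h1 := (hκ t ht).2
        have h2 := ha1 t ht
        have h3 := ha'nn t ht
        have h4 : (0:ℝ) ≤ -κ t - k := by linarith
        nlinarith [mul_nonneg (mul_nonneg h3 (show (0:ℝ) ≤ a t by linarith)) h4]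
    intro t ht
    have := hm h0Ici ht ht
    simp only [ha0, ha'0] at this
    nlinarith
  -- assembly
  obtain ⟨A, hA1, hAa⟩ : ∃ A : ℝ, 1 < A ∧ ∀ t, τ ≤ t → A ≤ a t := by
    refine ⟨1 + k * τ ^ 2 / 2, by nlinarith [mul_pos hτ hτ], fun t ht => ?_⟩
    have ht0 : 0 ≤ t := le_trans hτ.le ht
    refine le_trans ?_ (haq t ht0)
    nlinarith [mul_nonneg (sub_nonneg.2 ht) (show (0:ℝ) ≤ t + τ by linarith)]
  have hA0 : (0:ℝ) < A := by linarith
  obtain ⟨c, hc, hcak⟩ : ∃ c : ℝ, 0 < c ∧ ∀ t, τ ≤ t → c * a t ^ 2 ≤ a' t ^ 2 := by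
    refine ⟨k * (1 - 1 / A ^ 2), ?_, fun t ht => ?_⟩
    · have h1 : 1 / A ^ 2 < 1 := by
        rw [div_lt_one (by positivity)]
        nlinarith
      have h2 : 0 < 1 - 1 / A ^ 2 := by linarith
      positivity
    · have ht0 : 0 ≤ t := le_trans hτ.le ht
      have h1 := haa t ht0
      have hat := hAa t ht
      have h5 : A ^ 2 ≤ a t ^ 2 := by nlinarith
      have he : k * (1 - 1 / A ^ 2) * a t ^ 2 = k * a t ^ 2 - k * a t ^ 2 / A ^ 2 := by
        field_simp
      have h6 : k ≤ k * a t ^ 2 / A ^ 2 := by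
        rw [le_div_iff₀ (by positivity)]
        nlinarith
      linarith
  obtain ⟨D, hD, hDb⟩ : ∃ D : ℝ, 0 < D ∧ ∀ t, τ ≤ t → b' t ^ 2 ≤ D * a t ^ 2 := by
    refine ⟨1 + K * M ^ 2, by nlinarith [sq_nonneg M], fun t ht => ?_⟩
    have ht0 : 0 ≤ t := le_trans hτ.le ht
    have h1 := hbb t ht0
    have h2 := hbM t ht0
    have h3 := hbnn t ht0
    have h4 := ha1 t ht0
    have h5 : K * (b t * b t) ≤ K * (M * a t * (M * a t)) :=
      mul_le_mul_of_nonneg_left (mul_self_le_mul_self h3 h2) (by linarith)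
    have h6 : (1:ℝ) * 1 ≤ a t * a t := mul_self_le_mul_self (by norm_num) h4
    nlinarith [h5, h6]
  refine ⟨Real.sqrt (c / D), Real.sqrt_pos.2 (div_pos hc hD), ?_⟩
  intro t ht
  have key : (Real.sqrt (c / D) * |b' t|) ^ 2 ≤ |a' t| ^ 2 := by
    rw [mul_pow, Real.sq_sqrt (div_pos hc hD).le, sq_abs, sq_abs]
    calc c / D * b' t ^ 2 ≤ c / D * (D * a t ^ 2) :=
          mul_le_mul_of_nonneg_left (hDb t ht) (div_pos hc hD).le
      _ = c * a t ^ 2 := by field_simp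
      _ ≤ a' t ^ 2 := hcak t ht
  have h7 : 0 ≤ Real.sqrt (c / D) * |b' t| := mul_nonneg (Real.sqrt_nonneg _) (abs_nonneg _)
  have h8 := Real.sqrt_le_sqrt key
  rwa [Real.sqrt_sq h7, Real.sqrt_sq (abs_nonneg _)] at h8
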